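/- For every 1 ≤ p ≤ ∞, t(ℓ_1 ⊕_p ℓ_1) = 2, where ℓ_1 denotes the Banach space of absolutely summable real sequences with the norm ‖x‖ = Σ_n |x_n|. -/

import Mathlib

set_option maxHeartbeats 1000000

open ENNReal

/-- The thinness index `t(X)` of a normed space. -/
noncomputable def thinness (X : Type*) [NormedAddCommGroup X] : ℝ :=
  sInf {r : ℝ | 0 < r ∧ ∀ (n : ℕ) (x : Fin n → X), (∀ i, ‖x i‖ = 1) →
    ∀ ε : ℝ, 0 < ε → ∃ y : X, ‖y‖ = 1 ∧ ∀ i, ‖x i - y‖ < r + ε}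

/-- The space `ℓ₁` of absolutely summable real sequences. -/
noncomputable abbrev ellOne : Type := lp (fun _ : ℕ => ℝ) 1

namespace ThinnessAux

lemma ell1_norm (u : ellOne) : ‖u‖ = ∑' k, |u k| := by
  have h := lp.norm_eq_tsum_rpow (p := (1:ℝ≥0∞)) (by norm_num) u
  simpa [Real.norm_eq_abs] using h

lemma ell1_summable (u : ellOne) : Summable (fun k => |u k|) := by
  have := (lp.memℓp u).summable (p := (1:ℝ≥0∞)) (by norm_num)
  simpa [Real.norm_eq_abs] using this

lemma ell1_single_norm (i : ℕ) (α : ℝ) : ‖(lp.single 1 i α : ellOne)‖ = |α| := by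
  have := lp.norm_single (p := (1:ℝ≥0∞)) (E := fun _ : ℕ => ℝ) (by norm_num)
    i α
  simpa [Real.norm_eq_abs] using this

lemma ell1_key (α : ℝ) (hα : 0 ≤ α) (i : ℕ) (u : ellOne) :
    α + ‖u‖ - 2 * |u i| ≤ ‖(lp.single 1 i α : ellOne) - u‖ := by
  set w : ellOne := (lp.single 1 i α : ellOne) - u with hw
  have hco : ∀ k, w k = (if k = i then α else 0) - u k := by
    intro k
    rw [hw, lp.coeFn_sub, Pi.sub_apply, lp.single_apply]
    congr 1
    by_cases h : k = i
    · subst h; simp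
    · simp [h]
  have h1 : ‖w‖ = |α - u i| + ∑' k, if k = i then 0 else |u k| := by
    rw [ell1_norm, Summable.tsum_eq_add_tsum_ite (ell1_summable w) i]
    congr 1
    · rw [hco i]; simp
    · apply tsum_congr; intro k
      by_cases h : k = i
      · simp [h]
      · simp [h, hco k]
  have h2 : ‖u‖ = |u i| + ∑' k, if k = i then 0 else |u k| := by
    rw [ell1_norm, Summable.tsum_eq_add_tsum_ite (ell1_summable u) i]
  have h3 : α - |u i| ≤ |α - u i| := by
    have := abs_sub_abs_le_abs_sub α (u i)
    rw [abs_of_nonneg hα] at this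
    linarith
  linarith

lemma ell1_pigeon (u : ellOne) (n : ℕ) (hn : 0 < n) :
    ∃ i : Fin n, (n : ℝ) * |u (i : ℕ)| ≤ ‖u‖ := by
  by_contra h
  push_neg at h
  have h1 : ∑ k ∈ Finset.range n, |u k| ≤ ‖u‖ := by
    rw [ell1_norm]
    exact Summable.sum_le_tsum _ (fun k _ => abs_nonneg _) (ell1_summable u)
  have h2 : ∀ k ∈ Finset.range n, ‖u‖ / n < |u k| := by
    intro k hk
    have := h ⟨k, Finset.mem_range.mp hk⟩
    rw [div_lt_iff₀ (by positivity)]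
    simpa [mul_comm] using this
  have h3 := Finset.sum_lt_sum_of_nonempty (Finset.nonempty_range_iff.mpr hn.ne') h2
  rw [Finset.sum_const, Finset.card_range, nsmul_eq_mul,
    mul_div_cancel₀ _ (by positivity : (n:ℝ) ≠ 0)] at h3
  linarith

lemma superadd {s t q : ℝ} (hs : 0 ≤ s) (ht : 0 ≤ t) (hq : 1 ≤ q) :
    s ^ q + t ^ q ≤ (s + t) ^ q := by
  have hq0 : 0 < q := lt_of_lt_of_le one_pos hq
  have h := NNReal.rpow_add_rpow_le_add s.toNNReal t.toNNReal hq
  have h2 := NNReal.rpow_le_rpow h hq0.le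
  rw [← NNReal.rpow_mul, one_div, inv_mul_cancel₀ hq0.ne', NNReal.rpow_one] at h2
  have := NNReal.coe_le_coe.mpr h2
  push_cast at this
  rwa [Real.coe_toNNReal _ hs, Real.coe_toNNReal _ ht] at this

variable (p : ℝ≥0∞) [Fact (1 ≤ p)]

lemma p_ne_zero : p ≠ 0 := (lt_of_lt_of_le zero_lt_one Fact.out).ne'

lemma toReal_pos (h : p ≠ ∞) : 0 < p.toReal := ENNReal.toReal_pos (p_ne_zero p) h

lemma one_le_toReal (h : p ≠ ∞) : 1 ≤ p.toReal := by
  rw [← ENNReal.toReal_one]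
  exact ENNReal.toReal_mono h Fact.out

/-- the norm of a pair of reals in `WithLp p (ℝ × ℝ)` -/
noncomputable def NP (a b : ℝ) : ℝ := ‖(WithLp.equiv p (ℝ × ℝ)).symm (a, b)‖

lemma NP_eq_add (h : p ≠ ∞) (a b : ℝ) :
    NP p a b = (|a| ^ p.toReal + |b| ^ p.toReal) ^ (1 / p.toReal) := by
  rw [NP, WithLp.prod_norm_eq_add (toReal_pos p h)]
  simp [Real.norm_eq_abs]

lemma NP_eq_sup (a b : ℝ) : NP ∞ a b = |a| ⊔ |b| := by
  rw [NP, WithLp.prod_norm_eq_sup]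
  simp [Real.norm_eq_abs]

lemma norm_pair (z : WithLp p (ellOne × ellOne)) : ‖z‖ = NP p ‖z.fst‖ ‖z.snd‖ := by
  rcases eq_or_ne p ∞ with h | h
  · subst h
    rw [WithLp.prod_norm_eq_sup, NP_eq_sup]
    simp
  · rw [WithLp.prod_norm_eq_add (toReal_pos p h), NP_eq_add p h]
    simp

lemma NP_mono {a b c d : ℝ} (ha : 0 ≤ a) (hb : 0 ≤ b) (hac : a ≤ c) (hbd : b ≤ d) :
    NP p a b ≤ NP p c d := by
  rcases eq_or_ne p ∞ with h | h
  · subst h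
    rw [NP_eq_sup, NP_eq_sup]
    have h1 : |a| ≤ |c| := by rw [abs_of_nonneg ha, abs_of_nonneg (ha.trans hac)]; exact hac
    have h2 : |b| ≤ |d| := by rw [abs_of_nonneg hb, abs_of_nonneg (hb.trans hbd)]; exact hbd
    exact max_le_max h1 h2
  · rw [NP_eq_add p h, NP_eq_add p h]
    have hp0 := toReal_pos p h
    apply Real.rpow_le_rpow (by positivity)
    · apply add_le_add
      · apply Real.rpow_le_rpow (abs_nonneg _) _ hp0.le
        rw [abs_of_nonneg ha, abs_of_nonneg (ha.trans hac)]; exact hac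
      · apply Real.rpow_le_rpow (abs_nonneg _) _ hp0.le
        rw [abs_of_nonneg hb, abs_of_nonneg (hb.trans hbd)]; exact hbd
    · positivity

lemma NP_triangle (a b c d : ℝ) : NP p (a + c) (b + d) ≤ NP p a b + NP p c d := by
  unfold NP
  have : ((a + c, b + d) : ℝ × ℝ) = (a, b) + (c, d) := rfl
  rw [this, WithLp.equiv_symm_apply, WithLp.toLp_add]
  exact norm_add_le _ _

lemma NP_left (a : ℝ) : NP p a 0 = |a| := by
  rw [NP, WithLp.equiv_symm_apply, WithLp.norm_toLp_fst, Real.norm_eq_abs]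

lemma NP_right (b : ℝ) : NP p 0 b = |b| := by
  rw [NP, WithLp.equiv_symm_apply, WithLp.norm_toLp_snd, Real.norm_eq_abs]

lemma NP_smul (c a b : ℝ) (hc : 0 ≤ c) : NP p (c * a) (c * b) = c * NP p a b := by
  unfold NP
  have : ((c * a, c * b) : ℝ × ℝ) = c • (a, b) := rfl
  rw [this, WithLp.equiv_symm_apply, WithLp.toLp_smul, norm_smul, Real.norm_eq_abs, abs_of_nonneg hc]

lemma lower_top (r δ : ℝ) (hδ : 0 < δ) (h2δ : r + δ ≤ 2 - δ)
    (hr : ∀ (n : ℕ) (x : Fin n → WithLp ∞ (ellOne × ellOne)), (∀ i, ‖x i‖ = 1) →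
      ∀ ε : ℝ, 0 < ε → ∃ y : WithLp ∞ (ellOne × ellOne), ‖y‖ = 1 ∧ ∀ i, ‖x i - y‖ < r + ε) :
    False := by
  haveI : Fact ((1:ℝ≥0∞) ≤ ∞) := ⟨le_top⟩
  obtain ⟨n, hn⟩ := exists_nat_gt (4/δ)
  have hn0 : 0 < n := Nat.cast_pos.mp ((by positivity : (0:ℝ) < 4/δ).trans hn)
  have hnR : (0:ℝ) < n := by exact_mod_cast hn0
  have h2n : 2/(n:ℝ) < δ := by
    rw [div_lt_iff₀ hnR]
    rw [div_lt_iff₀ hδ] at hn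
    nlinarith
  set G : Fin n × Fin n → WithLp ∞ (ellOne × ellOne) := fun ij =>
    (WithLp.equiv ∞ (ellOne × ellOne)).symm
      (lp.single 1 (ij.1 : ℕ) 1, lp.single 1 (ij.2 : ℕ) 1) with hG
  set e := Fintype.equivFin (Fin n × Fin n) with he
  have hGnorm : ∀ idx, ‖(G ∘ e.symm) idx‖ = 1 := by
    intro idx
    rw [Function.comp_apply, norm_pair]
    have h1 : (G (e.symm idx)).fst = (lp.single 1 (((e.symm idx).1 : Fin n) : ℕ) 1 : ellOne) :=
      rfl
    have h2 : (G (e.symm idx)).snd = (lp.single 1 (((e.symm idx).2 : Fin n) : ℕ) 1 : ellOne) :=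
      rfl
    rw [h1, h2, ell1_single_norm, ell1_single_norm, NP_eq_sup]
    norm_num
  obtain ⟨y, hy1, hy2⟩ := hr _ (G ∘ e.symm) hGnorm δ hδ
  have hab : ‖y.fst‖ ⊔ ‖y.snd‖ = 1 := by
    rw [norm_pair, NP_eq_sup, abs_norm, abs_norm] at hy1
    exact hy1
  obtain ⟨i, hi⟩ := ell1_pigeon y.fst n hn0
  obtain ⟨j, hj⟩ := ell1_pigeon y.snd n hn0
  have hd := hy2 (e (i, j))
  rw [Function.comp_apply, Equiv.symm_apply_apply] at hd
  have hdeq : ‖G (i,j) - y‖ = ‖(lp.single 1 (i:ℕ) 1 : ellOne) - y.fst‖ ⊔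
      ‖(lp.single 1 (j:ℕ) 1 : ellOne) - y.snd‖ := by
    rw [norm_pair, NP_eq_sup, abs_norm, abs_norm]
    rfl
  rw [hdeq] at hd
  have hkey1 := ell1_key 1 zero_le_one i y.fst
  have hkey2 := ell1_key 1 zero_le_one j y.snd
  rcases le_total ‖y.fst‖ ‖y.snd‖ with h | h
  · have hb1 : ‖y.snd‖ = 1 := by rwa [sup_eq_right.mpr h] at hab
    have hvj : |y.snd (j:ℕ)| ≤ 1/n := by
      rw [le_div_iff₀ hnR, mul_comm]
      rw [hb1] at hj
      exact hj
    have hle : 2 - 2/(n:ℝ) ≤ ‖(lp.single 1 (j:ℕ) 1 : ellOne) - y.snd‖ := by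
      rw [hb1] at hkey2
      have : 2/(n:ℝ) = 2 * (1/n) := by ring
      linarith
    have := hle.trans (le_sup_right.trans hd.le)
    linarith
  · have ha1 : ‖y.fst‖ = 1 := by rwa [sup_eq_left.mpr h] at hab
    have hui : |y.fst (i:ℕ)| ≤ 1/n := by
      rw [le_div_iff₀ hnR, mul_comm]
      rw [ha1] at hi
      exact hi
    have hle : 2 - 2/(n:ℝ) ≤ ‖(lp.single 1 (i:ℕ) 1 : ellOne) - y.fst‖ := by
      rw [ha1] at hkey1
      have : 2/(n:ℝ) = 2 * (1/n) := by ring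
      linarith
    have := hle.trans (le_sup_left.trans hd.le)
    linarith


lemma lower_lt_top (hp : p ≠ ∞) (r δ : ℝ) (hδ : 0 < δ) (h2δ : r + δ ≤ 2 - δ)
    (hr : ∀ (n : ℕ) (x : Fin n → WithLp p (ellOne × ellOne)), (∀ i, ‖x i‖ = 1) →
      ∀ ε : ℝ, 0 < ε → ∃ y : WithLp p (ellOne × ellOne), ‖y‖ = 1 ∧ ∀ i, ‖x i - y‖ < r + ε) :
    False := by
  set q := p.toReal with hqdef
  have hq1 : 1 ≤ q := one_le_toReal p hp
  have hq0 : 0 < q := lt_of_lt_of_le one_pos hq1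
  have rpow_le_of : ∀ {x y : ℝ}, 0 ≤ x → 0 ≤ y → x ^ q ≤ y ^ q → x ≤ y := by
    intro x y hx hy h
    calc x = (x ^ q) ^ (1/q) := by rw [one_div, Real.rpow_rpow_inv hx hq0.ne']
      _ ≤ (y ^ q) ^ (1/q) := Real.rpow_le_rpow (by positivity) h (by positivity)
      _ = y := by rw [one_div, Real.rpow_rpow_inv hy hq0.ne']
  obtain ⟨n, hn⟩ := exists_nat_gt (8/δ)
  have hn0 : 0 < n := Nat.cast_pos.mp ((by positivity : (0:ℝ) < 8/δ).trans hn)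
  have hnR : (0:ℝ) < n := by exact_mod_cast hn0
  have h2n : 2/(n:ℝ) < δ/4 := by
    rw [div_lt_iff₀ hnR]
    rw [div_lt_iff₀ hδ] at hn
    nlinarith
  obtain ⟨m, hm⟩ := exists_nat_gt ((8/δ)^q)
  have hmpos : (0:ℝ) < (8/δ)^q := Real.rpow_pos_of_pos (by positivity) q
  have hm0 : 0 < m := Nat.cast_pos.mp (hmpos.trans hm)
  have hmR : (0:ℝ) < m := by exact_mod_cast hm0
  set η : ℝ := (1/(m:ℝ)) ^ (1/q) with hηdef
  have hη0 : 0 ≤ η := Real.rpow_nonneg (by positivity) _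
  have hηq : η ^ q = 1/(m:ℝ) := by
    rw [hηdef, one_div q, Real.rpow_inv_rpow (by positivity) hq0.ne']
  have hηδ : η < δ/8 := by
    have h1 : (1:ℝ)/m < (δ/8)^q := by
      have h2 := one_div_lt_one_div_of_lt hmpos hm
      rwa [one_div ((8/δ)^q), ← Real.inv_rpow (by positivity), inv_div] at h2
    calc η < ((δ/8)^q)^(1/q) :=
          Real.rpow_lt_rpow (by positivity) h1 (by positivity)
      _ = δ/8 := by rw [one_div, Real.rpow_rpow_inv (by positivity) hq0.ne']
  set γ : ℝ := η + 2/n with hγdef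
  have hγ0 : 0 ≤ γ := by positivity
  have hγδ : 2*γ < δ := by rw [hγdef]; linarith
  set A : Fin (m+1) → ℝ := fun k => (((k:ℕ):ℝ)/m) ^ (1/q) with hAdef
  set B : Fin (m+1) → ℝ := fun k => (1 - ((k:ℕ):ℝ)/m) ^ (1/q) with hBdef
  have hkm : ∀ k : Fin (m+1), ((k:ℕ):ℝ)/m ≤ 1 := by
    intro k
    rw [div_le_one hmR]
    exact_mod_cast Nat.lt_succ_iff.mp k.isLt
  have hA0 : ∀ k, 0 ≤ A k := fun k => Real.rpow_nonneg (by positivity) _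
  have hB0 : ∀ k, 0 ≤ B k := fun k => Real.rpow_nonneg (by linarith [hkm k]) _
  have hAq : ∀ k, (A k) ^ q = ((k:ℕ):ℝ)/m := by
    intro k
    rw [hAdef, one_div q, Real.rpow_inv_rpow (by positivity) hq0.ne']
  have hBq : ∀ k, (B k) ^ q = 1 - ((k:ℕ):ℝ)/m := by
    intro k
    rw [hBdef, one_div q, Real.rpow_inv_rpow (by linarith [hkm k]) hq0.ne']
  set F : Fin n × Fin n × Fin (m+1) → WithLp p (ellOne × ellOne) := fun ijk =>
    (WithLp.equiv p (ellOne × ellOne)).symm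
      (lp.single 1 (ijk.1 : ℕ) (A ijk.2.2), lp.single 1 ((ijk.2.1 : Fin n) : ℕ) (B ijk.2.2))
    with hFdef
  set e := Fintype.equivFin (Fin n × Fin n × Fin (m+1)) with he
  have hFnorm : ∀ idx, ‖(F ∘ e.symm) idx‖ = 1 := by
    intro idx
    rw [Function.comp_apply, norm_pair]
    set k := (e.symm idx).2.2
    have h1 : (F (e.symm idx)).fst = (lp.single 1 (((e.symm idx).1 : Fin n) : ℕ) (A k) : ellOne) :=
      rfl
    have h2 : (F (e.symm idx)).snd =
        (lp.single 1 (((e.symm idx).2.1 : Fin n) : ℕ) (B k) : ellOne) := rfl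
    rw [h1, h2, ell1_single_norm, ell1_single_norm, abs_of_nonneg (hA0 k),
      abs_of_nonneg (hB0 k), NP_eq_add p hp, ← hqdef, abs_of_nonneg (hA0 k),
      abs_of_nonneg (hB0 k), hAq, hBq]
    rw [show ((k:ℕ):ℝ)/m + (1 - ((k:ℕ):ℝ)/m) = 1 by ring, Real.one_rpow]
  obtain ⟨y, hy1, hy2⟩ := hr _ (F ∘ e.symm) hFnorm δ hδ
  have hNPab : NP p ‖y.fst‖ ‖y.snd‖ = 1 := by rw [← norm_pair]; exact hy1
  have habq : ‖y.fst‖ ^ q + ‖y.snd‖ ^ q = 1 := by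
    have h1 := hNPab
    rw [NP_eq_add p hp, abs_of_nonneg (norm_nonneg _), abs_of_nonneg (norm_nonneg _),
      ← hqdef] at h1
    have h2 := congrArg (· ^ q) h1
    simpa [one_div, Real.rpow_inv_rpow (by positivity : (0:ℝ) ≤ ‖y.fst‖^q + ‖y.snd‖^q) hq0.ne',
      Real.one_rpow] using h2
  have ha1 : ‖y.fst‖ ≤ 1 := by
    refine rpow_le_of (norm_nonneg _) zero_le_one ?_
    rw [Real.one_rpow]
    nlinarith [Real.rpow_nonneg (norm_nonneg y.snd) q]
  have hb1 : ‖y.snd‖ ≤ 1 := by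
    refine rpow_le_of (norm_nonneg _) zero_le_one ?_
    rw [Real.one_rpow]
    nlinarith [Real.rpow_nonneg (norm_nonneg y.fst) q]
  -- choice of grid point
  set k₀ : ℕ := ⌊(m:ℝ) * ‖y.fst‖ ^ q⌋₊ with hk₀def
  have hyq1 : ‖y.fst‖ ^ q ≤ 1 := by
    nlinarith [Real.rpow_nonneg (norm_nonneg y.snd) q]
  have hk₀le : k₀ ≤ m := by
    have h1 : (m:ℝ) * ‖y.fst‖ ^ q ≤ (m:ℝ) := by
      have := mul_le_mul_of_nonneg_left hyq1 hmR.le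
      simpa using this
    calc k₀ ≤ ⌊(m:ℝ)⌋₊ := Nat.floor_mono h1
      _ = m := Nat.floor_natCast m
  set k : Fin (m+1) := ⟨k₀, Nat.lt_succ_of_le hk₀le⟩ with hkdef
  have hfl1 : ((k₀:ℕ):ℝ) ≤ (m:ℝ) * ‖y.fst‖ ^ q := Nat.floor_le (by positivity)
  have hfl2 : (m:ℝ) * ‖y.fst‖ ^ q < (k₀:ℝ) + 1 := Nat.lt_floor_add_one _
  have hka : ((k₀:ℝ))/m ≤ ‖y.fst‖ ^ q := by
    rw [div_le_iff₀ hmR, mul_comm]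
    exact hfl1
  have hka2 : ‖y.fst‖ ^ q ≤ ((k₀:ℝ))/m + 1/m := by
    rw [← add_div, le_div_iff₀ hmR, mul_comm]
    linarith
  have haA : ‖y.fst‖ ≤ A k + η := by
    refine rpow_le_of (norm_nonneg _) (by positivity) ?_
    calc ‖y.fst‖ ^ q ≤ ((k₀:ℝ))/m + 1/m := hka2
      _ = (A k) ^ q + η ^ q := by rw [hAq, hηq, hkdef]
      _ ≤ (A k + η) ^ q := superadd (hA0 k) hη0 hq1
  have hbB : ‖y.snd‖ ≤ B k := by
    refine rpow_le_of (norm_nonneg _) (hB0 k) ?_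
    rw [hBq]
    have : ((k:ℕ):ℝ) = (k₀:ℝ) := by rw [hkdef]
    rw [this]
    linarith
  -- pigeonhole
  obtain ⟨i, hi⟩ := ell1_pigeon y.fst n hn0
  obtain ⟨j, hj⟩ := ell1_pigeon y.snd n hn0
  have hui : |y.fst (i:ℕ)| ≤ 1/n := by
    rw [le_div_iff₀ hnR, mul_comm]
    exact hi.trans ha1
  have hvj : |y.snd (j:ℕ)| ≤ 1/n := by
    rw [le_div_iff₀ hnR, mul_comm]
    exact hj.trans hb1
  -- distance estimate
  have hd := hy2 (e (i, j, k))
  rw [Function.comp_apply, Equiv.symm_apply_apply] at hd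
  have hfst : (F (i,j,k) - y).fst = (lp.single 1 (i:ℕ) (A k) : ellOne) - y.fst := rfl
  have hsnd : (F (i,j,k) - y).snd = (lp.single 1 (j:ℕ) (B k) : ellOne) - y.snd := rfl
  have hcomp1 : 2*‖y.fst‖ - γ ≤ ‖(F (i,j,k) - y).fst‖ := by
    rw [hfst]
    have hkey := ell1_key (A k) (hA0 k) i y.fst
    have : 2/(n:ℝ) = 2 * (1/n) := by ring
    rw [hγdef]
    linarith
  have hcomp2 : 2*‖y.snd‖ - γ ≤ ‖(F (i,j,k) - y).snd‖ := by
    rw [hsnd]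
    have hkey := ell1_key (B k) (hB0 k) j y.snd
    have : 2/(n:ℝ) = 2 * (1/n) := by ring
    rw [hγdef]
    linarith
  set Aa : ℝ := max (2*‖y.fst‖ - γ) 0 with hAadef
  set Bb : ℝ := max (2*‖y.snd‖ - γ) 0 with hBbdef
  have hd1 : NP p Aa Bb ≤ ‖F (i,j,k) - y‖ := by
    rw [norm_pair]
    exact NP_mono p (le_max_right _ _) (le_max_right _ _)
      (max_le hcomp1 (norm_nonneg _)) (max_le hcomp2 (norm_nonneg _))
  have hAa2 : Aa ≤ 2*‖y.fst‖ := max_le (by linarith) (by positivity)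
  have hBb2 : Bb ≤ 2*‖y.snd‖ := max_le (by linarith) (by positivity)
  have hAa3 : 2*‖y.fst‖ - Aa ≤ γ := by
    have := le_max_left (2*‖y.fst‖ - γ) 0
    rw [← hAadef] at this
    linarith
  have hBb3 : 2*‖y.snd‖ - Bb ≤ γ := by
    have := le_max_left (2*‖y.snd‖ - γ) 0
    rw [← hBbdef] at this
    linarith
  have hd2 : NP p (2*‖y.fst‖) (2*‖y.snd‖) ≤ NP p Aa Bb +
      NP p (2*‖y.fst‖ - Aa) (2*‖y.snd‖ - Bb) := by
    have h := NP_triangle p Aa Bb (2*‖y.fst‖ - Aa) (2*‖y.snd‖ - Bb)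
    rw [show Aa + (2*‖y.fst‖ - Aa) = 2*‖y.fst‖ by ring,
      show Bb + (2*‖y.snd‖ - Bb) = 2*‖y.snd‖ by ring] at h
    exact h
  have hd3 : NP p (2*‖y.fst‖ - Aa) (2*‖y.snd‖ - Bb) ≤ NP p γ γ :=
    NP_mono p (by linarith) (by linarith) hAa3 hBb3
  have hd4 : NP p γ γ ≤ 2*γ := by
    have h := NP_triangle p γ 0 0 γ
    rw [add_zero, zero_add, NP_left, NP_right, abs_of_nonneg hγ0] at h
    linarith
  have hd5 : NP p (2*‖y.fst‖) (2*‖y.snd‖) = 2 := by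
    rw [NP_smul p 2 _ _ (by norm_num), hNPab]
    norm_num
  linarith [hd1, hd2, hd3, hd4]

end ThinnessAux

open ThinnessAux in
/-- For every `1 ≤ p ≤ ∞`, `t(ℓ₁ ⊕_p ℓ₁) = 2`. -/
theorem thinness_ellOne_prodLp_ellOne (p : ℝ≥0∞) [Fact (1 ≤ p)] :
    thinness (WithLp p (ellOne × ellOne)) = 2 := by
  classical
  set S := {r : ℝ | 0 < r ∧ ∀ (n : ℕ) (x : Fin n → WithLp p (ellOne × ellOne)),
    (∀ i, ‖x i‖ = 1) → ∀ ε : ℝ, 0 < ε →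
    ∃ y : WithLp p (ellOne × ellOne), ‖y‖ = 1 ∧ ∀ i, ‖x i - y‖ < r + ε} with hS
  have hthin : thinness (WithLp p (ellOne × ellOne)) = sInf S := rfl
  have hunit : ∃ y : WithLp p (ellOne × ellOne), ‖y‖ = 1 := by
    refine ⟨(WithLp.equiv p (ellOne × ellOne)).symm ((lp.single 1 0 1 : ellOne), (0 : ellOne)), ?_⟩
    rw [norm_pair]
    have h1 : ((WithLp.equiv p (ellOne × ellOne)).symm
        ((lp.single 1 0 1 : ellOne), (0 : ellOne))).fst = (lp.single 1 0 1 : ellOne) := rfl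
    have h2 : ((WithLp.equiv p (ellOne × ellOne)).symm
        ((lp.single 1 0 1 : ellOne), (0 : ellOne))).snd = (0 : ellOne) := rfl
    rw [h1, h2, ell1_single_norm, norm_zero, abs_one, NP_left, abs_one]
  have h2mem : (2:ℝ) ∈ S := by
    rw [hS]
    refine ⟨two_pos, ?_⟩
    intro n x hx ε hε
    obtain ⟨y, hy⟩ := hunit
    refine ⟨y, hy, fun i => ?_⟩
    calc ‖x i - y‖ ≤ ‖x i‖ + ‖y‖ := norm_sub_le _ _
      _ = 2 := by rw [hx i, hy]; norm_num
      _ < 2 + ε := by linarith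
  have hlb : ∀ r ∈ S, 2 ≤ r := by
    intro r hrS
    rw [hS] at hrS
    obtain ⟨hr0, hr⟩ := hrS
    by_contra hcon
    push_neg at hcon
    set δ : ℝ := (2 - r)/2 with hδdef
    have hδ : 0 < δ := by rw [hδdef]; linarith
    have h2δ : r + δ ≤ 2 - δ := by rw [hδdef]; linarith
    rcases eq_or_ne p ∞ with hp | hp
    · subst hp
      exact lower_top r δ hδ h2δ hr
    · exact lower_lt_top p hp r δ hδ h2δ hr
  rw [hthin]
  exact le_antisymm (csInf_le ⟨0, fun r hr => hr.1.le⟩ h2mem) (le_csInf ⟨2, h2mem⟩ hlb)
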